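/- Newton step error bound via power functions: let f be in an RKHS H with ||f||_H ≤ B, and suppose at a point x the true gradient g and Hessian H_x (invertible) satisfy ||g − ĝ||² ≤ π_g B² and ||H_x − Ĥ||² ≤ π_H B² (operator norm) for estimates ĝ, Ĥ with Ĥ invertible. Then the Newton-step error satisfies ||H_x^{-1}g − Ĥ^{-1}ĝ|| ≤ √2 · B · ||H_x^{-1}|| · sqrt(π_g + s·π_H), where s = ||Ĥ^{-1}||² ||ĝ||². -/
import Mathlib
set_option maxHeartbeats 1000000


/-- Operator 2-norm of a real matrix (norm of the induced linear map on
Euclidean space). -/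
noncomputable def opNorm {d : ℕ} (A : Matrix (Fin d) (Fin d) ℝ) : ℝ :=
  ‖(Matrix.toEuclideanCLM (𝕜 := ℝ) A : EuclideanSpace ℝ (Fin d) →L[ℝ] EuclideanSpace ℝ (Fin d))‖

/-- Newton-step error bound via power functions: given gradient and Hessian
estimation errors controlled by the power functions `πg`, `πH` times `B²`,
the Newton-step error is bounded by `√2 · B · ‖Hx⁻¹‖ · √(πg + s πH)` with
`s = ‖Ĥ⁻¹‖² ‖ĝ‖²`. -/
theorem newton_step_power_function_bound (d : ℕ) (B πg πH : ℝ)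
    (hB : 0 ≤ B) (hπg : 0 ≤ πg) (hπH : 0 ≤ πH)
    (g ghat : EuclideanSpace ℝ (Fin d))
    (Hx Hhat : Matrix (Fin d) (Fin d) ℝ)
    (hHx : IsUnit Hx.det) (hHhat : IsUnit Hhat.det)
    (hgerr : ‖g - ghat‖ ^ 2 ≤ πg * B ^ 2)
    (hHerr : opNorm (Hx - Hhat) ^ 2 ≤ πH * B ^ 2) :
    ‖(Matrix.toEuclideanCLM (𝕜 := ℝ) Hx⁻¹) g -
      (Matrix.toEuclideanCLM (𝕜 := ℝ) Hhat⁻¹) ghat‖ ≤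
      Real.sqrt 2 * B * opNorm Hx⁻¹ *
        Real.sqrt (πg + (opNorm Hhat⁻¹ ^ 2 * ‖ghat‖ ^ 2) * πH) := by
  set L := Matrix.toEuclideanCLM (𝕜 := ℝ) (n := Fin d) with hLdef
  -- algebraic identity
  have key : Hx⁻¹ - Hhat⁻¹ = Hx⁻¹ * (Hhat - Hx) * Hhat⁻¹ := by
    rw [Matrix.mul_sub, Matrix.sub_mul, Matrix.nonsing_inv_mul Hx hHx,
      Matrix.mul_assoc, Matrix.mul_nonsing_inv Hhat hHhat, Matrix.mul_one, Matrix.one_mul]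
  have decomp : (L Hx⁻¹) g - (L Hhat⁻¹) ghat
      = (L Hx⁻¹) (g - ghat) + (L (Hx⁻¹ - Hhat⁻¹)) ghat := by
    rw [map_sub L]
    simp only [ContinuousLinearMap.sub_apply, map_sub]
    abel
  set a := opNorm Hx⁻¹ with ha
  set c := opNorm Hhat⁻¹ with hc
  set e1 := ‖g - ghat‖ with he1
  set e2 := opNorm (Hx - Hhat) with he2
  have ha0 : 0 ≤ a := norm_nonneg _
  have hc0 : 0 ≤ c := norm_nonneg _
  have he10 : 0 ≤ e1 := norm_nonneg _
  have he20 : 0 ≤ e2 := norm_nonneg _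
  have hg0 : 0 ≤ ‖ghat‖ := norm_nonneg _
  have bound1 : ‖(L Hx⁻¹) (g - ghat)‖ ≤ a * e1 :=
    ContinuousLinearMap.le_opNorm _ _
  have bound2 : ‖(L (Hx⁻¹ - Hhat⁻¹)) ghat‖ ≤ a * e2 * c * ‖ghat‖ := by
    have hnorm : ‖L (Hx⁻¹ - Hhat⁻¹)‖ ≤ a * e2 * c := by
      rw [key, map_mul, map_mul]
      calc ‖L Hx⁻¹ * L (Hhat - Hx) * L Hhat⁻¹‖
          ≤ ‖L Hx⁻¹ * L (Hhat - Hx)‖ * ‖L Hhat⁻¹‖ := norm_mul_le _ _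
        _ ≤ ‖L Hx⁻¹‖ * ‖L (Hhat - Hx)‖ * ‖L Hhat⁻¹‖ := by
            gcongr; exact norm_mul_le _ _
        _ = a * e2 * c := by
            rw [ha, hc, he2]
            congr 2
            show ‖L (Hhat - Hx)‖ = ‖L (Hx - Hhat)‖
            rw [map_sub, map_sub, norm_sub_rev]
    calc ‖(L (Hx⁻¹ - Hhat⁻¹)) ghat‖ ≤ ‖L (Hx⁻¹ - Hhat⁻¹)‖ * ‖ghat‖ :=
          ContinuousLinearMap.le_opNorm _ _
      _ ≤ a * e2 * c * ‖ghat‖ := by gcongr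
  have main : ‖(L Hx⁻¹) g - (L Hhat⁻¹) ghat‖ ≤ a * e1 + a * e2 * c * ‖ghat‖ := by
    rw [decomp]
    exact (norm_add_le _ _).trans (add_le_add bound1 bound2)
  -- numeric part
  have hrhs : a * e1 + a * e2 * c * ‖ghat‖
      ≤ Real.sqrt 2 * B * a * Real.sqrt (πg + (c ^ 2 * ‖ghat‖ ^ 2) * πH) := by
    have h2 : a * e1 + a * e2 * c * ‖ghat‖
        ≤ Real.sqrt 2 * Real.sqrt ((a * e1) ^ 2 + (a * e2 * c * ‖ghat‖) ^ 2) := by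
      have := Real.sqrt_le_sqrt (show (a * e1 + a * e2 * c * ‖ghat‖) ^ 2
          ≤ 2 * ((a * e1) ^ 2 + (a * e2 * c * ‖ghat‖) ^ 2) by nlinarith [sq_nonneg (a*e1 - a*e2*c*‖ghat‖)])
      calc a * e1 + a * e2 * c * ‖ghat‖
          = Real.sqrt ((a * e1 + a * e2 * c * ‖ghat‖) ^ 2) := by
            rw [Real.sqrt_sq (by positivity)]
        _ ≤ Real.sqrt (2 * ((a * e1) ^ 2 + (a * e2 * c * ‖ghat‖) ^ 2)) := this
        _ = Real.sqrt 2 * Real.sqrt ((a * e1) ^ 2 + (a * e2 * c * ‖ghat‖) ^ 2) := by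
            rw [Real.sqrt_mul (by norm_num)]
    have h3 : Real.sqrt ((a * e1) ^ 2 + (a * e2 * c * ‖ghat‖) ^ 2)
        ≤ a * (B * Real.sqrt (πg + (c ^ 2 * ‖ghat‖ ^ 2) * πH)) := by
      have : (a * e1) ^ 2 + (a * e2 * c * ‖ghat‖) ^ 2
          ≤ (a * (B * Real.sqrt (πg + (c ^ 2 * ‖ghat‖ ^ 2) * πH))) ^ 2 := by
        have hsq : (B * Real.sqrt (πg + (c ^ 2 * ‖ghat‖ ^ 2) * πH)) ^ 2
            = B ^ 2 * (πg + (c ^ 2 * ‖ghat‖ ^ 2) * πH) := by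
          rw [mul_pow, Real.sq_sqrt (by positivity)]
        have he2sq : e2 ^ 2 ≤ πH * B ^ 2 := hHerr
        have he1sq : e1 ^ 2 ≤ πg * B ^ 2 := hgerr
        have h1 : a ^ 2 * e1 ^ 2 ≤ a ^ 2 * (πg * B ^ 2) :=
          mul_le_mul_of_nonneg_left he1sq (sq_nonneg a)
        have h2' : (a ^ 2 * (c ^ 2 * ‖ghat‖ ^ 2)) * e2 ^ 2
            ≤ (a ^ 2 * (c ^ 2 * ‖ghat‖ ^ 2)) * (πH * B ^ 2) :=
          mul_le_mul_of_nonneg_left he2sq (by positivity)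
        nlinarith [hsq, h1, h2']
      calc Real.sqrt ((a * e1) ^ 2 + (a * e2 * c * ‖ghat‖) ^ 2)
          ≤ Real.sqrt ((a * (B * Real.sqrt (πg + (c ^ 2 * ‖ghat‖ ^ 2) * πH))) ^ 2) :=
            Real.sqrt_le_sqrt this
        _ = _ := Real.sqrt_sq (mul_nonneg ha0 (mul_nonneg hB (Real.sqrt_nonneg _)))
    calc a * e1 + a * e2 * c * ‖ghat‖
        ≤ Real.sqrt 2 * Real.sqrt ((a * e1) ^ 2 + (a * e2 * c * ‖ghat‖) ^ 2) := h2
      _ ≤ Real.sqrt 2 * (a * (B * Real.sqrt (πg + (c ^ 2 * ‖ghat‖ ^ 2) * πH))) := by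
          gcongr
      _ = Real.sqrt 2 * B * a * Real.sqrt (πg + (c ^ 2 * ‖ghat‖ ^ 2) * πH) := by ring
  exact main.trans hrhs
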